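/- Let X be a compact Hausdorff space, A a subset of C(X,[0,1]) containing all constant functions and closed under the operations ψ ↦ c ∨ ψ and ψ ↦ c·ψ for every c ∈ [0,1] (a (∨,·)-subspace), and let μ : A → [0,1] be monotone, ·-homogeneous (μ(c·ψ) = c·μ(ψ)), and ∨-homogeneous (μ(c ∨ ψ) = c ∨ μ(ψ)). Then for every fixed φ ∈ C(X,[0,1]), setting A' = A ∪ {d ∨ (c·φ) : c, d ∈ [0,1]}, there exists a monotone, ·-homogeneous, ∨-homogeneous functional μ' : A' → [0,1] extending μ. -/

import Mathlib

open unitInterval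

noncomputable section

/-- Two `[0,1]`-valued functions are comonotone. -/
def Comonotone {X : Type*} (f g : X → I) : Prop :=
  ∀ x y : X, 0 ≤ ((f x : ℝ) - (f y : ℝ)) * ((g x : ℝ) - (g y : ℝ))
/-- Pointwise max of a constant with a continuous `[0,1]`-valued map. -/
def cSup {X : Type*} [TopologicalSpace X] (c : I) (f : C(X, I)) : C(X, I) :=
  ⟨fun x => c ⊔ f x, continuous_const.max f.continuous⟩

/-- Pointwise min of a constant with a continuous `[0,1]`-valued map. -/
def cInf {X : Type*} [TopologicalSpace X] (c : I) (f : C(X, I)) : C(X, I) :=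
  ⟨fun x => c ⊓ f x, continuous_const.min f.continuous⟩

/-- Pointwise product of a constant with a continuous `[0,1]`-valued map. -/
def cMul {X : Type*} [TopologicalSpace X] (c : I) (f : C(X, I)) : C(X, I) :=
  ⟨fun x => c * f x,
    Continuous.subtype_mk (continuous_const.mul (continuous_subtype_val.comp f.continuous)) _⟩

/-- Pointwise max of two continuous `[0,1]`-valued maps. -/
def fSup {X : Type*} [TopologicalSpace X] (f g : C(X, I)) : C(X, I) :=
  ⟨fun x => f x ⊔ g x, f.continuous.max g.continuous⟩

/-- A `(∨,·)`-subspace of `C(X,[0,1])`: contains all constants and is closed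
under `ψ ↦ c ∨ ψ` and `ψ ↦ c·ψ`. -/
def IsVMulSubspace {X : Type*} [TopologicalSpace X] (A : Set C(X, I)) : Prop :=
  (∀ c : I, ContinuousMap.const X c ∈ A) ∧
  ∀ (c : I), ∀ ψ ∈ A, cSup c ψ ∈ A ∧ cMul c ψ ∈ A

/-! ### Auxiliary lemmas -/

lemma coeI_sup (x y : I) : ((x ⊔ y : I) : ℝ) = max (x : ℝ) (y : ℝ) := by
  rcases le_total x y with h | h
  · rw [sup_eq_right.2 h, max_eq_right (Subtype.coe_le_coe.2 h)]
  · rw [sup_eq_left.2 h, max_eq_left (Subtype.coe_le_coe.2 h)]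

lemma coeI_mul (x y : I) : ((x * y : I) : ℝ) = (x : ℝ) * (y : ℝ) := rfl

lemma cSup_apply' {X : Type*} [TopologicalSpace X] (c : I) (f : C(X, I)) (x : X) :
    cSup c f x = c ⊔ f x := rfl

lemma cMul_apply' {X : Type*} [TopologicalSpace X] (c : I) (f : C(X, I)) (x : X) :
    cMul c f x = c * f x := rfl

lemma Ile (x y : I) (h : (x : ℝ) ≤ (y : ℝ)) : x ≤ y := Subtype.coe_le_coe.1 h

/-- One-step extension: a monotone, `·`-homogeneous, `∨`-homogeneous functional on a
`(∨,·)`-subspace `A` extends to `A' = A ∪ {d ∨ (c·φ)}`. -/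
theorem one_step_extension {X : Type*} [TopologicalSpace X] [CompactSpace X] [T2Space X]
    (A : Set C(X, I)) (hA : IsVMulSubspace A) (μ : C(X, I) → I)
    (hmono : ∀ ψ ∈ A, ∀ χ ∈ A, (∀ x, ψ x ≤ χ x) → μ ψ ≤ μ χ)
    (hmul : ∀ (c : I), ∀ ψ ∈ A, μ (cMul c ψ) = c * μ ψ)
    (hsup : ∀ (c : I), ∀ ψ ∈ A, μ (cSup c ψ) = c ⊔ μ ψ)
    (φ : C(X, I)) :
    ∃ μ' : C(X, I) → I,
      (∀ ψ ∈ A, μ' ψ = μ ψ) ∧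
      (∀ ψ ∈ A ∪ {χ | ∃ c d : I, χ = cSup d (cMul c φ)},
        ∀ χ ∈ A ∪ {χ | ∃ c d : I, χ = cSup d (cMul c φ)},
          (∀ x, ψ x ≤ χ x) → μ' ψ ≤ μ' χ) ∧
      (∀ (c : I), ∀ ψ ∈ A ∪ {χ | ∃ c d : I, χ = cSup d (cMul c φ)}, μ' (cMul c ψ) = c * μ' ψ) ∧
      (∀ (c : I), ∀ ψ ∈ A ∪ {χ | ∃ c d : I, χ = cSup d (cMul c φ)}, μ' (cSup c ψ) = c ⊔ μ' ψ) := by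
  classical
  -- value of μ on constants
  have hμ0 : μ (ContinuousMap.const X (0 : I)) = 0 := by
    have h := hmul 0 _ (hA.1 0)
    have he : cMul 0 (ContinuousMap.const X (0 : I)) = ContinuousMap.const X (0 : I) := by
      ext x
      show ((0 * (0:I) : I) : ℝ) = ((0:I) : ℝ)
      simp
    rw [he] at h
    simpa using h
  have hμc : ∀ c : I, μ (ContinuousMap.const X c) = c := by
    intro c
    have h := hsup c _ (hA.1 0)
    have he : cSup c (ContinuousMap.const X (0 : I)) = ContinuousMap.const X c := by
      ext x
      show (((c ⊔ 0 : I)) : ℝ) = (c : ℝ)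
      rw [coeI_sup]
      exact max_eq_left c.2.1
    rw [he, hμ0] at h
    simpa using h
  -- X is nonempty
  have hX : Nonempty X := by
    by_contra h
    rw [not_nonempty_iff] at h
    have h01 : (ContinuousMap.const X (0 : I)) = ContinuousMap.const X (1 : I) := by
      ext x; exact absurd (Set.mem_univ x) (by simpa using (h.elim x))
    have h0 := hμc 0
    rw [h01, hμc 1] at h0
    exact one_ne_zero h0
  -- min and max of φ
  obtain ⟨xm, -, hxm⟩ := isCompact_univ.exists_isMinOn Set.univ_nonempty
    (continuous_subtype_val.comp φ.continuous).continuousOn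
  obtain ⟨xM, -, hxM⟩ := isCompact_univ.exists_isMaxOn Set.univ_nonempty
    (continuous_subtype_val.comp φ.continuous).continuousOn
  set m : ℝ := (φ xm : ℝ) with hm_def
  set Mv : ℝ := (φ xM : ℝ) with hM_def
  have hm : ∀ x, m ≤ (φ x : ℝ) := fun x => hxm (Set.mem_univ x)
  have hM : ∀ x, (φ x : ℝ) ≤ Mv := fun x => hxM (Set.mem_univ x)
  -- the extension value a
  set Sa : Set ℝ := {r | ∃ (c : ℝ) (ψ : C(X, I)), ψ ∈ A ∧ 0 < c ∧ c ≤ 1 ∧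
    (∀ x, c * (φ x : ℝ) ≤ (ψ x : ℝ)) ∧ r = (μ ψ : ℝ) / c} with hSa_def
  have hSne : Sa.Nonempty := by
    refine ⟨(μ (ContinuousMap.const X (1 : I)) : ℝ), 1, ContinuousMap.const X 1, hA.1 1,
      one_pos, le_refl 1, fun x => ?_, by rw [div_one]⟩
    simpa using (φ x).2.2
  have hSbdd : BddBelow Sa := by
    refine ⟨0, fun r hr => ?_⟩
    obtain ⟨c, ψ, -, hc, -, -, rfl⟩ := hr
    exact div_nonneg (μ ψ).2.1 hc.le
  set a : ℝ := sInf Sa with ha_def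
  have ham : m ≤ a := by
    refine le_csInf hSne ?_
    rintro r ⟨c, ψ, hψ, hc, hc1, hcφ, rfl⟩
    rw [le_div_iff₀ hc, mul_comm]
    have hcm0 : 0 ≤ c * m := mul_nonneg hc.le (φ xm).2.1
    have hcm1 : c * m ≤ 1 := by
      calc c * m ≤ 1 * 1 := mul_le_mul hc1 (φ xm).2.2 (φ xm).2.1 zero_le_one
      _ = 1 := one_mul 1
    have hle : ∀ x, (⟨c * m, hcm0, hcm1⟩ : I) ≤ ψ x := by
      intro x
      exact Ile _ _ (le_trans (mul_le_mul_of_nonneg_left (hm x) hc.le) (hcφ x))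
    have := hmono _ (hA.1 ⟨c * m, hcm0, hcm1⟩) ψ hψ (fun x => hle x)
    rw [hμc] at this
    exact Subtype.coe_le_coe.2 this
  have haM : a ≤ Mv := by
    refine csInf_le hSbdd ⟨1, ContinuousMap.const X (φ xM), hA.1 _, one_pos, le_refl 1,
      fun x => ?_, ?_⟩
    · simpa using (Subtype.coe_le_coe.1 (hM x) : φ x ≤ φ xM)
    · rw [div_one, hμc]
  have ha0 : 0 ≤ a := le_trans (φ xm).2.1 ham
  have ha1 : a ≤ 1 := le_trans haM (φ xM).2.2
  set aI : I := ⟨a, ha0, ha1⟩ with haI_def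
  -- lower bridge: anything in A above d ∨ cφ has μ at least d ⊔ c·a
  have hlow : ∀ ψ ∈ A, ∀ c d : I, (∀ x, cSup d (cMul c φ) x ≤ ψ x) → d ⊔ c * aI ≤ μ ψ := by
    intro ψ hψ c d hle
    refine sup_le ?_ ?_
    · have hd : ∀ x, (d : I) ≤ ψ x := fun x =>
        le_trans (le_sup_left : d ≤ d ⊔ (cMul c φ) x) (hle x)
      have := hmono _ (hA.1 d) ψ hψ hd
      rwa [hμc] at this
    · rcases eq_or_lt_of_le c.2.1 with hc0 | hcpos
      · apply Ile
        rw [coeI_mul]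
        rw [show (c : ℝ) = 0 from hc0.symm]
        simpa using (μ ψ).2.1
      · have hmem : (μ ψ : ℝ) / (c : ℝ) ∈ Sa := by
          refine ⟨(c : ℝ), ψ, hψ, hcpos, c.2.2, fun x => ?_, rfl⟩
          have := le_trans (le_sup_right : (cMul c φ) x ≤ d ⊔ (cMul c φ) x) (hle x)
          exact Subtype.coe_le_coe.2 this
        have := csInf_le hSbdd hmem
        apply Ile
        rw [coeI_mul]
        calc (c : ℝ) * a ≤ (c : ℝ) * ((μ ψ : ℝ) / (c : ℝ)) :=
          mul_le_mul_of_nonneg_left this c.2.1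
        _ = (μ ψ : ℝ) := by field_simp
  -- upper bridge: anything in A below d ∨ cφ has μ at most d ⊔ c·a
  have hup : ∀ ψ ∈ A, ∀ c d : I, (∀ x, ψ x ≤ cSup d (cMul c φ) x) → μ ψ ≤ d ⊔ c * aI := by
    intro ψ hψ c d hle
    apply Ile
    rw [coeI_sup, coeI_mul]
    set u : ℝ := (μ ψ : ℝ) with hu_def
    by_contra hcon
    push_neg at hcon
    rw [max_lt_iff] at hcon
    obtain ⟨hdu, hcau⟩ := hcon
    rcases eq_or_lt_of_le c.2.1 with hc0 | hcpos
    · -- c = 0 : ψ ≤ const d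
      have : ∀ x, ψ x ≤ (ContinuousMap.const X d) x := by
        intro x
        apply Ile
        have := Subtype.coe_le_coe.2 (hle x)
        rw [cSup_apply', coeI_sup, cMul_apply', coeI_mul, ← hc0, zero_mul,
          max_eq_left d.2.1] at this
        simpa using this
      have := hmono ψ hψ _ (hA.1 d) this
      rw [hμc] at this
      exact absurd (Subtype.coe_le_coe.2 this) (not_le.2 hdu)
    · -- c > 0
      have halt : a < u / (c : ℝ) := by
        rw [lt_div_iff₀ hcpos]
        linarith [hcau]
      obtain ⟨r, hrS, hru⟩ := exists_lt_of_csInf_lt hSne halt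
      obtain ⟨c', χ, hχ, hc'pos, hc'1, hc'φ, rfl⟩ := hrS
      rcases le_total (c : ℝ) c' with hcc' | hc'c
      · -- c ≤ c'
        set s : ℝ := (c : ℝ) / c' with hs_def
        have hspos : 0 < s := div_pos hcpos hc'pos
        have hs1 : s ≤ 1 := (div_le_one hc'pos).2 hcc'
        set sI : I := ⟨s, hspos.le, hs1⟩ with hsI_def
        have hkey : ∀ x, ψ x ≤ cSup d (cMul sI χ) x := by
          intro x
          apply Ile
          rw [cSup_apply', coeI_sup, cMul_apply', coeI_mul]
          have h1 := Subtype.coe_le_coe.2 (hle x)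
          rw [cSup_apply', coeI_sup, cMul_apply', coeI_mul] at h1
          have h2 : (c : ℝ) * (φ x : ℝ) ≤ s * (χ x : ℝ) := by
            have h3 : (c : ℝ) * (φ x : ℝ) = s * (c' * (φ x : ℝ)) := by
              rw [hs_def]; field_simp; all_goals ring
            rw [h3]
            exact mul_le_mul_of_nonneg_left (hc'φ x) hspos.le
          exact le_trans h1 (max_le_max (le_refl _) h2)
        have hAm : cSup d (cMul sI χ) ∈ A := (hA.2 d _ (hA.2 sI χ hχ).2).1
        have h4 := hmono ψ hψ _ hAm hkey
        rw [hsup d _ (hA.2 sI χ hχ).2, hmul sI χ hχ] at h4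
        have h5 := Subtype.coe_le_coe.2 h4
        rw [coeI_sup, coeI_mul] at h5
        have h6 : s * (μ χ : ℝ) = (c : ℝ) * ((μ χ : ℝ) / c') := by
          rw [hs_def]; field_simp; all_goals ring
        rw [h6] at h5
        have h7 : (c : ℝ) * ((μ χ : ℝ) / c') < u := by
          calc (c : ℝ) * ((μ χ : ℝ) / c') < (c : ℝ) * (u / (c : ℝ)) :=
            mul_lt_mul_of_pos_left hru hcpos
          _ = u := by field_simp
        exact absurd h5 (not_le.2 (max_lt hdu h7))
      · -- c' ≤ c
        set s : ℝ := c' / (c : ℝ) with hs_def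
        have hspos : 0 < s := div_pos hc'pos hcpos
        have hs1 : s ≤ 1 := (div_le_one hcpos).2 hc'c
        set sI : I := ⟨s, hspos.le, hs1⟩ with hsI_def
        have hkey : ∀ x, cMul sI ψ x ≤ cSup (sI * d) χ x := by
          intro x
          apply Ile
          rw [cMul_apply', coeI_mul, cSup_apply', coeI_sup, coeI_mul]
          have h1 := Subtype.coe_le_coe.2 (hle x)
          rw [cSup_apply', coeI_sup, cMul_apply', coeI_mul] at h1
          have h2 : s * (ψ x : ℝ) ≤ s * max (d : ℝ) ((c : ℝ) * (φ x : ℝ)) :=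
            mul_le_mul_of_nonneg_left h1 hspos.le
          rw [mul_max_of_nonneg _ _ hspos.le] at h2
          have h3 : s * ((c : ℝ) * (φ x : ℝ)) = c' * (φ x : ℝ) := by
            rw [hs_def]; field_simp; all_goals ring
          rw [h3] at h2
          exact le_trans h2 (max_le_max (le_refl _) (hc'φ x))
        have h4 := hmono _ (hA.2 sI ψ hψ).2 _ (hA.2 (sI * d) χ hχ).1 hkey
        rw [hmul sI ψ hψ, hsup (sI * d) χ hχ] at h4
        have h5 := Subtype.coe_le_coe.2 h4
        rw [coeI_mul, coeI_sup, coeI_mul] at h5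
        rcases le_max_iff.1 h5 with h6 | h6
        · have : u ≤ (d : ℝ) := le_of_mul_le_mul_left (by linarith [h6]) hspos
          exact absurd this (not_le.2 hdu)
        · have h7 : u ≤ (μ χ : ℝ) / s := (le_div_iff₀ hspos).2 (by linarith [h6])
          have h8 : (μ χ : ℝ) / s = (c : ℝ) * ((μ χ : ℝ) / c') := by
            rw [hs_def]; field_simp; all_goals ring
          have h9 : (c : ℝ) * ((μ χ : ℝ) / c') < u := by
            calc (c : ℝ) * ((μ χ : ℝ) / c') < (c : ℝ) * (u / (c : ℝ)) :=
              mul_lt_mul_of_pos_left hru hcpos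
            _ = u := by field_simp
          rw [h8] at h7
          linarith
  -- pure comparison of two φ-forms
  have hcomp : ∀ c d c' d' : I, (∀ x, cSup d (cMul c φ) x ≤ cSup d' (cMul c' φ) x) →
      d ⊔ c * aI ≤ d' ⊔ c' * aI := by
    intro c d c' d' hle
    have hx : ∀ x, max (d : ℝ) ((c : ℝ) * (φ x : ℝ)) ≤
        max (d' : ℝ) ((c' : ℝ) * (φ x : ℝ)) := by
      intro x
      have := Subtype.coe_le_coe.2 (hle x)
      rwa [cSup_apply', coeI_sup, cMul_apply', coeI_mul, cSup_apply', coeI_sup,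
        cMul_apply', coeI_mul] at this
    apply Ile
    rw [coeI_sup, coeI_mul, coeI_sup, coeI_mul]
    refine max_le ?_ ?_
    · calc (d : ℝ) ≤ max (d : ℝ) ((c : ℝ) * m) := le_max_left _ _
      _ ≤ max (d' : ℝ) ((c' : ℝ) * m) := hx xm
      _ ≤ max (d' : ℝ) ((c' : ℝ) * a) :=
        max_le_max (le_refl _) (mul_le_mul_of_nonneg_left ham c'.2.1)
    · by_contra hcon
      push_neg at hcon
      rw [max_lt_iff] at hcon
      obtain ⟨hd', hc'⟩ := hcon
      have hapos : (0 : ℝ) < (aI : ℝ) := by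
        rcases (aI.2.1 : (0:ℝ) ≤ (aI : ℝ)).lt_or_eq with h | h
        · exact h
        · exfalso
          rw [← h, mul_zero] at hd'
          exact absurd d'.2.1 (not_le.2 hd')
      have hcc' : (c' : ℝ) < (c : ℝ) := by
        by_contra h
        push_neg at h
        exact absurd (mul_le_mul_of_nonneg_right h aI.2.1) (not_le.2 hc')
      have hMa : (aI : ℝ) ≤ Mv := haM
      have h1 := hx xM
      have h2 : (c : ℝ) * Mv ≤ max (d : ℝ) ((c : ℝ) * Mv) := le_max_right _ _
      have h3 : (d' : ℝ) < (c : ℝ) * Mv :=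
        lt_of_lt_of_le hd' (mul_le_mul_of_nonneg_left hMa c.2.1)
      have h4 : (c' : ℝ) * Mv < (c : ℝ) * Mv := by
        have hMpos : 0 < Mv := lt_of_lt_of_le hapos hMa
        exact mul_lt_mul_of_pos_right hcc' hMpos
      have h5 : max (d' : ℝ) ((c' : ℝ) * Mv) < (c : ℝ) * Mv := max_lt h3 h4
      linarith [le_trans h2 h1]
  -- definition of the extension
  set S : Set C(X, I) := {χ | ∃ c d : I, χ = cSup d (cMul c φ)} with hS_def
  set μ' : C(X, I) → I := fun g =>
    if g ∈ A then μ g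
    else if h : ∃ c d : I, g = cSup d (cMul c φ) then
      h.choose_spec.choose ⊔ h.choose * aI
    else 0 with hμ'_def
  have hμ'A : ∀ ψ ∈ A, μ' ψ = μ ψ := by
    intro ψ hψ
    simp only [hμ'_def, if_pos hψ]
  -- master value lemma
  have hV : ∀ (c d : I) (g : C(X, I)), g = cSup d (cMul c φ) → μ' g = d ⊔ c * aI := by
    intro c d g hg
    by_cases hgA : g ∈ A
    · rw [hμ'A g hgA]
      refine le_antisymm ?_ ?_
      · exact hup g hgA c d (fun x => by rw [hg])
      · exact hlow g hgA c d (fun x => by rw [hg])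
    · have hex : ∃ c d : I, g = cSup d (cMul c φ) := ⟨c, d, hg⟩
      have : μ' g = hex.choose_spec.choose ⊔ hex.choose * aI := by
        simp only [hμ'_def, if_neg hgA, dif_pos hex]
      rw [this]
      have h0 : g = cSup hex.choose_spec.choose (cMul hex.choose φ) :=
        hex.choose_spec.choose_spec
      refine le_antisymm ?_ ?_
      · refine hcomp _ _ c d (fun x => le_of_eq ?_)
        exact ContinuousMap.congr_fun (by rw [← h0, ← hg]) x
      · refine hcomp c d _ _ (fun x => le_of_eq ?_)
        exact ContinuousMap.congr_fun (by rw [← hg, ← h0]) x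
  refine ⟨μ', hμ'A, ?_, ?_, ?_⟩
  · -- monotonicity
    rintro ψ (hψ | ⟨c, d, rfl⟩) χ (hχ | ⟨c', d', rfl⟩) hle
    · rw [hμ'A ψ hψ, hμ'A χ hχ]
      exact hmono ψ hψ χ hχ hle
    · rw [hμ'A ψ hψ, hV c' d' _ rfl]
      exact hup ψ hψ c' d' hle
    · rw [hμ'A χ hχ, hV c d _ rfl]
      exact hlow χ hχ c d hle
    · rw [hV c d _ rfl, hV c' d' _ rfl]
      exact hcomp c d c' d' hle
  · -- multiplicative homogeneity
    rintro c ψ (hψ | ⟨c', d, rfl⟩)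
    · rw [hμ'A ψ hψ, hμ'A _ (hA.2 c ψ hψ).2]
      exact hmul c ψ hψ
    · have he : cMul c (cSup d (cMul c' φ)) = cSup (c * d) (cMul (c * c') φ) := by
        ext x
        show ((c * (d ⊔ c' * φ x) : I) : ℝ) = (((c * d) ⊔ (c * c') * φ x : I) : ℝ)
        rw [coeI_mul, coeI_sup, coeI_sup, coeI_mul, coeI_mul, coeI_mul, coeI_mul,
          mul_max_of_nonneg _ _ c.2.1, mul_assoc]
      have h1 : μ' (cMul c (cSup d (cMul c' φ))) = (c * d) ⊔ (c * c') * aI := by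
        rw [he]; exact hV _ _ _ rfl
      have h2 : μ' (cSup d (cMul c' φ)) = d ⊔ c' * aI := hV _ _ _ rfl
      rw [h1, h2]
      apply Subtype.ext
      simp only [coeI_mul, coeI_sup]
      rw [mul_max_of_nonneg _ _ c.2.1, mul_assoc]
  · -- sup homogeneity
    rintro c ψ (hψ | ⟨c', d, rfl⟩)
    · rw [hμ'A ψ hψ, hμ'A _ (hA.2 c ψ hψ).1]
      exact hsup c ψ hψ
    · have he : cSup c (cSup d (cMul c' φ)) = cSup (c ⊔ d) (cMul c' φ) := by
        ext x
        show ((c ⊔ (d ⊔ c' * φ x) : I) : ℝ) = (((c ⊔ d) ⊔ c' * φ x : I) : ℝ)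
        rw [coeI_sup, coeI_sup, coeI_sup, coeI_sup, max_assoc]
      have h1 : μ' (cSup c (cSup d (cMul c' φ))) = (c ⊔ d) ⊔ c' * aI := by
        rw [he]; exact hV _ _ _ rfl
      have h2 : μ' (cSup d (cMul c' φ)) = d ⊔ c' * aI := hV _ _ _ rfl
      rw [h1, h2, sup_assoc]
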